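/- Let 0 ≤ λ < 1 and let r₁, r₂ be distinct real numbers. Set λ₁ = (tanh r₁ − λ)/(1 − λ tanh r₁), λ₂ = (tanh r₁ + λ)/(1 + λ tanh r₁), and s = r₂ − r₁. Then |λ₂ − λ₁| / |λ₁ + λ₂ + 2·coth(s)| = λ·|tanh r₂ − tanh r₁| / (1 − λ² tanh r₁ tanh r₂). -/

import Mathlib

open Real

lemma tanh_abs_lt_one (x : ℝ) : |Real.tanh x| < 1 := by
  rw [Real.tanh_eq_sinh_div_cosh, abs_div, abs_of_pos (Real.cosh_pos x),
    div_lt_one (Real.cosh_pos x)]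
  nlinarith [Real.cosh_sq x, Real.cosh_pos x, abs_nonneg (Real.sinh x),
    sq_abs (Real.sinh x)]

/-- the modulus of the dilatation of the normal flow between
parallel surfaces, expressed through the principal curvatures of `S(r₁)`, equals
`λ |tanh r₂ - tanh r₁| / (1 - λ² tanh r₁ tanh r₂)`. Here `coth s = cosh s / sinh s`. -/
theorem stmt_12 (lam r1 r2 : ℝ) (h0 : 0 ≤ lam) (h1 : lam < 1) (hne : r1 ≠ r2) :
    |(Real.tanh r1 + lam) / (1 + lam * Real.tanh r1) -
        (Real.tanh r1 - lam) / (1 - lam * Real.tanh r1)| /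
      |(Real.tanh r1 - lam) / (1 - lam * Real.tanh r1) +
          (Real.tanh r1 + lam) / (1 + lam * Real.tanh r1) +
          2 * (Real.cosh (r2 - r1) / Real.sinh (r2 - r1))| =
    lam * |Real.tanh r2 - Real.tanh r1| /
      (1 - lam ^ 2 * Real.tanh r1 * Real.tanh r2) := by
  set t1 := Real.tanh r1 with ht1
  set t2 := Real.tanh r2 with ht2
  have habs1 : |t1| < 1 := tanh_abs_lt_one r1
  have habs2 : |t2| < 1 := tanh_abs_lt_one r2
  have h1a : -1 < t1 := by cases abs_lt.mp habs1; linarith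
  have h1b : t1 < 1 := (abs_lt.mp habs1).2
  have h2a : -1 < t2 := (abs_lt.mp habs2).1
  have h2b : t2 < 1 := (abs_lt.mp habs2).2
  have hl1 : |lam * t1| < 1 := by
    calc |lam * t1| = lam * |t1| := by rw [abs_mul, abs_of_nonneg h0]
    _ ≤ 1 * |t1| := by nlinarith [abs_nonneg t1]
    _ < 1 := by simpa using habs1
  have hd1 : (1 : ℝ) - lam * t1 > 0 := by cases abs_lt.mp hl1; linarith
  have hd2 : (1 : ℝ) + lam * t1 > 0 := by cases abs_lt.mp hl1; linarith
  have hlt : |lam ^ 2 * t1 * t2| < 1 := by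
    have : |lam ^ 2 * t1 * t2| = lam ^ 2 * |t1| * |t2| := by
      rw [abs_mul, abs_mul, abs_pow, abs_of_nonneg h0]
    rw [this]
    have h1' : lam ^ 2 < 1 := by nlinarith
    calc lam ^ 2 * |t1| * |t2| ≤ lam ^ 2 * |t1| * 1 := by
          apply mul_le_mul_of_nonneg_left habs2.le (by positivity)
      _ = lam ^ 2 * |t1| := by ring
      _ ≤ lam ^ 2 * 1 := mul_le_mul_of_nonneg_left habs1.le (by positivity)
      _ < 1 := by linarith
  have hdd : (0 : ℝ) < 1 - lam ^ 2 * t1 * t2 := by cases abs_lt.mp hlt; linarith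
  have hch1 : (0 : ℝ) < Real.cosh r1 := Real.cosh_pos r1
  have hch2 : (0 : ℝ) < Real.cosh r2 := Real.cosh_pos r2
  have hsne : Real.sinh (r2 - r1) ≠ 0 := by
    intro h
    apply hne
    have := Real.sinh_injective (by simpa using h.trans Real.sinh_zero.symm)
    linarith [sub_eq_zero.mp this]
  -- coth identity
  have hcoth : Real.cosh (r2 - r1) / Real.sinh (r2 - r1) = (1 - t1 * t2) / (t2 - t1) := by
    have hs : Real.sinh (r2 - r1) = Real.cosh r1 * Real.cosh r2 * (t2 - t1) := by
      rw [Real.sinh_sub, ht1, ht2, Real.tanh_eq_sinh_div_cosh, Real.tanh_eq_sinh_div_cosh]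
      field_simp
    have hc : Real.cosh (r2 - r1) = Real.cosh r1 * Real.cosh r2 * (1 - t1 * t2) := by
      rw [Real.cosh_sub, ht1, ht2, Real.tanh_eq_sinh_div_cosh, Real.tanh_eq_sinh_div_cosh]
      field_simp
    have ht12 : t2 - t1 ≠ 0 := by
      intro h
      apply hsne
      rw [hs, h, mul_zero]
    rw [hs, hc]
    field_simp
  have ht12 : t2 - t1 ≠ 0 := by
    intro h
    apply hsne
    rw [Real.sinh_sub]
    have : Real.sinh r2 * Real.cosh r1 - Real.cosh r2 * Real.sinh r1 =
        Real.cosh r1 * Real.cosh r2 * (t2 - t1) := by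
      rw [ht1, ht2, Real.tanh_eq_sinh_div_cosh, Real.tanh_eq_sinh_div_cosh]
      field_simp
    rw [this, h, mul_zero]
  rw [hcoth]
  -- A = numerator, B = denominator (inside abs)
  have hA : (t1 + lam) / (1 + lam * t1) - (t1 - lam) / (1 - lam * t1) =
      2 * lam * (1 - t1 ^ 2) / ((1 - lam * t1) * (1 + lam * t1)) := by
    field_simp [hd1.ne', hd2.ne', show (1:ℝ) - t1 * lam ≠ 0 by rw [mul_comm]; exact hd1.ne', show (1:ℝ) + t1 * lam ≠ 0 by rw [mul_comm]; exact hd2.ne']; ring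
  have hB : (t1 - lam) / (1 - lam * t1) + (t1 + lam) / (1 + lam * t1) +
      2 * ((1 - t1 * t2) / (t2 - t1)) =
      2 * (1 - t1 ^ 2) * (1 - lam ^ 2 * t1 * t2) /
        (((1 - lam * t1) * (1 + lam * t1)) * (t2 - t1)) := by
    field_simp [hd1.ne', hd2.ne', show (1:ℝ) - t1 * lam ≠ 0 by rw [mul_comm]; exact hd1.ne', show (1:ℝ) + t1 * lam ≠ 0 by rw [mul_comm]; exact hd2.ne']; ring
  rw [hA, hB]
  have hp : (0:ℝ) < 1 - t1 ^ 2 := by nlinarith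
  have hBne : 2 * (1 - t1 ^ 2) * (1 - lam ^ 2 * t1 * t2) /
        (((1 - lam * t1) * (1 + lam * t1)) * (t2 - t1)) ≠ 0 := by
    apply div_ne_zero
    · nlinarith
    · exact mul_ne_zero (by positivity) ht12
  rw [← abs_div]
  have : 2 * lam * (1 - t1 ^ 2) / ((1 - lam * t1) * (1 + lam * t1)) /
      (2 * (1 - t1 ^ 2) * (1 - lam ^ 2 * t1 * t2) /
        (((1 - lam * t1) * (1 + lam * t1)) * (t2 - t1))) =
      lam * (t2 - t1) / (1 - lam ^ 2 * t1 * t2) := by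
    rw [div_div_div_eq]
    field_simp
  rw [this, abs_div, abs_mul, abs_of_nonneg h0, abs_of_pos hdd]
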